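/- Let n ≥ 1, r > 0, let D ⊆ ℝⁿ be an open set, and let G be any grid of mesh r. If (D_k)_k denotes the family of connected components of D \ G, then the total new boundary area created inside D by cutting along the grid is at most twice the area of D on the grid: ∑_k H^{n−1}( D ∩ frontier(D_k) ) ≤ 2 · H^{n−1}(D ∩ G). -/

import Mathlib

open MeasureTheory Filter
open scoped ENNReal

open Set Module in
private lemma stmt4_plane_null (n : ℕ) (i j : Fin n) (hij : i ≠ j) (a b : ℝ) :
    μH[(n:ℝ)-1] {x : EuclideanSpace ℝ (Fin n) | x i = a ∧ x j = b} = 0 := by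
  set E := EuclideanSpace ℝ (Fin n)
  set φi : E →ₗ[ℝ] ℝ := (EuclideanSpace.proj (𝕜 := ℝ) i).toLinearMap with hφi
  set φj : E →ₗ[ℝ] ℝ := (EuclideanSpace.proj (𝕜 := ℝ) j).toLinearMap with hφj
  set W₀ : Submodule ℝ E := LinearMap.ker φi ⊓ LinearMap.ker φj with hW₀
  have hji : (EuclideanSpace.single j (1:ℝ) : E) ∈ LinearMap.ker φi := by
    simp [hφi, EuclideanSpace.single_apply, hij]
  have hjW : (EuclideanSpace.single j (1:ℝ) : E) ∉ W₀ := by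
    simp [hW₀, hφj, EuclideanSpace.single_apply]
  have h1 : W₀ < LinearMap.ker φi := lt_of_le_of_ne inf_le_left (fun h => hjW (h ▸ hji))
  have h2 : finrank ℝ W₀ < finrank ℝ (LinearMap.ker φi) :=
    Submodule.finrank_lt_finrank_of_lt h1
  have h3 : finrank ℝ (LinearMap.ker φi) < finrank ℝ E := by
    apply Submodule.finrank_lt
    intro h
    have : (EuclideanSpace.single i (1:ℝ) : E) ∈ LinearMap.ker φi := h ▸ Submodule.mem_top
    simp [hφi, EuclideanSpace.single_apply] at this
  have hE : finrank ℝ E = n := finrank_euclideanSpace_fin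
  have hfr : (finrank ℝ W₀ : ℝ) < (n:ℝ) - 1 := by
    rw [hE] at h3
    have h4 : finrank ℝ W₀ + 2 ≤ n := by omega
    have := (Nat.cast_le (α := ℝ)).2 h4
    push_cast at this
    linarith
  set c : E := EuclideanSpace.single i a + EuclideanSpace.single j b with hc
  have hiso : Isometry (fun y : W₀ => c + (y : E)) := by
    intro y z
    rw [edist_add_left]
    rfl
  have hsub : {x : E | x i = a ∧ x j = b} ⊆ (fun y : W₀ => c + (y : E)) '' univ := by
    rintro x ⟨hxa, hxb⟩
    have hci : c i = a := by simp [hc, EuclideanSpace.single_apply, hij]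
    have hcj : c j = b := by simp [hc, EuclideanSpace.single_apply, hij.symm]
    have hmem : x - c ∈ W₀ := by
      constructor <;>
      · simp only [hφi, hφj, LinearMap.mem_ker, ContinuousLinearMap.coe_coe]
        show x _ - c _ = 0
        simp [hci, hcj, hxa, hxb]
    exact ⟨⟨x - c, hmem⟩, mem_univ _, by simp⟩
  have hd0 : (0:ℝ) ≤ (n:ℝ) - 1 := by
    have h5 : 1 ≤ n := Nat.one_le_iff_ne_zero.2 (by rintro rfl; exact i.elim0)
    have := (Nat.one_le_cast (α := ℝ)).2 h5; linarith
  have hnull : μH[(n:ℝ)-1] (univ : Set W₀) = 0 := by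
    have := Real.hausdorffMeasure_of_finrank_lt (E := W₀) (d := (n:ℝ)-1) hfr
    simp [this]
  refine measure_mono_null hsub ?_
  have := hiso.lipschitz.hausdorffMeasure_image_le hd0 (univ : Set W₀)
  simpa [hnull] using this

open Set in
private lemma stmt4_coord_dist {n : ℕ} (j : Fin n) (x y : EuclideanSpace ℝ (Fin n)) :
    |x j - y j| ≤ dist x y := by
  rw [EuclideanSpace.dist_eq]
  have h1 : |x j - y j| = Real.sqrt (dist (x j) (y j) ^ 2) := by
    rw [Real.dist_eq, Real.sqrt_sq_eq_abs, abs_abs]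
  rw [h1]
  apply Real.sqrt_le_sqrt
  exact Finset.single_le_sum (f := fun i => dist (x i) (y i) ^ 2)
    (fun i _ => sq_nonneg _) (Finset.mem_univ j)

open Set in
private lemma stmt4_closed_1d (c r : ℝ) (hr : 0 < r) :
    IsClosed {t : ℝ | ∃ k : ℤ, t = c + r * k} := by
  have : {t : ℝ | ∃ k : ℤ, t = c + r * k} =
      (fun t : ℝ => (t - c)/r) ⁻¹' (range ((↑) : ℤ → ℝ)) := by
    ext t
    simp only [mem_setOf_eq, mem_preimage, mem_range]
    constructor
    · rintro ⟨k, hk⟩; exact ⟨k, by rw [hk]; field_simp; ring⟩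
    · rintro ⟨k, hk⟩; refine ⟨k, ?_⟩; field_simp at hk; linarith
  rw [this]
  exact Int.isClosedEmbedding_coe_real.isClosed_range.preimage
    ((continuous_id.sub continuous_const).div_const r)

open Set Metric in
/-- Key geometric lemma: at a point of `D` lying on exactly one grid hyperplane, at most two
connected components of `D \ G` have `x` on their frontier. -/
private lemma stmt4_two_comps (n : ℕ) (r : ℝ) (hr : 0 < r)
    (v : EuclideanSpace ℝ (Fin n)) (D : Set (EuclideanSpace ℝ (Fin n))) (hD : IsOpen D)
    (x : EuclideanSpace ℝ (Fin n)) (hxD : x ∈ D) (i : Fin n) (k : ℤ)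
    (hx : x i = v i + r * k)
    (honly : ∀ j, j ≠ i → ∀ l : ℤ, x j ≠ v j + r * l) :
    ∃ a b : EuclideanSpace ℝ (Fin n),
      a ∈ D \ {x : EuclideanSpace ℝ (Fin n) | ∃ i : Fin n, ∃ k : ℤ, x i = v i + r * k} ∧
      b ∈ D \ {x : EuclideanSpace ℝ (Fin n) | ∃ i : Fin n, ∃ k : ℤ, x i = v i + r * k} ∧
      ∀ C : Set (EuclideanSpace ℝ (Fin n)),
        (∃ z ∈ D \ {x : EuclideanSpace ℝ (Fin n) | ∃ i : Fin n, ∃ k : ℤ, x i = v i + r * k},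
          connectedComponentIn
            (D \ {x : EuclideanSpace ℝ (Fin n) | ∃ i : Fin n, ∃ k : ℤ, x i = v i + r * k}) z = C)
        → x ∈ frontier C →
        C = connectedComponentIn
            (D \ {x : EuclideanSpace ℝ (Fin n) | ∃ i : Fin n, ∃ k : ℤ, x i = v i + r * k}) a ∨
        C = connectedComponentIn
            (D \ {x : EuclideanSpace ℝ (Fin n) | ∃ i : Fin n, ∃ k : ℤ, x i = v i + r * k}) b := by
  set G : Set (EuclideanSpace ℝ (Fin n)) :=
    {x : EuclideanSpace ℝ (Fin n) | ∃ i : Fin n, ∃ k : ℤ, x i = v i + r * k} with hGdef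
  set U : Set (EuclideanSpace ℝ (Fin n)) := D \ G with hUdef
  obtain ⟨ε₀, hε₀, hball₀⟩ := Metric.isOpen_iff.1 hD x hxD
  set d : Fin n → ℝ := fun j =>
    if j = i then r/2 else Metric.infDist (x j) {t : ℝ | ∃ l : ℤ, t = v j + r * l} with hd
  have hd_pos : ∀ j, 0 < d j := by
    intro j
    by_cases hji : j = i
    · simp only [hd, hji, if_pos]; positivity
    · have hcl : IsClosed {t : ℝ | ∃ l : ℤ, t = v j + r * l} := stmt4_closed_1d _ _ hr
      have hne : {t : ℝ | ∃ l : ℤ, t = v j + r * l}.Nonempty := ⟨v j + r * (0:ℤ), ⟨0, rfl⟩⟩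
      have hnm : x j ∉ {t : ℝ | ∃ l : ℤ, t = v j + r * l} := by
        rintro ⟨l, hl⟩; exact honly j hji l hl
      have := (hcl.notMem_iff_infDist_pos hne).1 hnm
      simpa [hd, hji] using this
  set ε : ℝ := min ε₀ (Finset.univ.inf' ⟨i, Finset.mem_univ i⟩ d) with hε
  have hεpos : 0 < ε :=
    lt_min hε₀ ((Finset.lt_inf'_iff _).2 fun j _ => hd_pos j)
  have hεr : ε ≤ r/2 := by
    refine (min_le_right _ _).trans ?_
    have := Finset.inf'_le d (Finset.mem_univ i)
    simpa [hd] using this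
  have hεj : ∀ j, j ≠ i → ε ≤ Metric.infDist (x j) {t : ℝ | ∃ l : ℤ, t = v j + r * l} := by
    intro j hji
    refine (min_le_right _ _).trans ?_
    have := Finset.inf'_le d (Finset.mem_univ j)
    simpa [hd, hji] using this
  have hballD : ball x ε ⊆ D := (ball_subset_ball (min_le_left _ _)).trans hball₀
  -- all grid points inside the ball lie on the single hyperplane
  have hGball : ∀ y ∈ ball x ε, y ∈ G → y i = v i + r * k := by
    intro y hy hyG
    obtain ⟨j, l, hjl⟩ := hyG
    have hdist : |x j - y j| < ε := by
      calc |x j - y j| ≤ dist x y := stmt4_coord_dist j x y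
        _ = dist y x := dist_comm x y
        _ < ε := hy
    by_cases hji : j = i
    · subst hji
      by_cases hkl : k = l
      · subst hkl; rw [hjl]
      · exfalso
        have hsub : x j - y j = r * ((k:ℝ) - l) := by rw [hx, hjl]; ring
        have habs : |x j - y j| = r * |(k:ℝ) - l| := by
          rw [hsub, abs_mul, abs_of_pos hr]
        have h1 : (1:ℝ) ≤ |(k:ℝ) - l| := by
          have hne : k - l ≠ 0 := sub_ne_zero.2 hkl
          have := Int.one_le_abs hne
          calc (1:ℝ) ≤ |((k - l : ℤ) : ℝ)| := by
                rw [← Int.cast_abs]; exact_mod_cast this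
            _ = |(k:ℝ) - l| := by push_cast; ring_nf
        nlinarith [hdist, habs, hεr]
    · exfalso
      have hmem : y j ∈ {t : ℝ | ∃ l : ℤ, t = v j + r * l} := ⟨l, hjl⟩
      have h2 := Metric.infDist_le_dist_of_mem (x := x j) hmem
      rw [Real.dist_eq] at h2
      have h3 := (hεj j hji).trans h2
      linarith [hdist, h3]
  -- the two half balls
  have hsingle_mem : ∀ t : ℝ, t ≠ 0 →
      (x + EuclideanSpace.single i t) ∈ ball x ε → (x + EuclideanSpace.single i t) ∈ U := by
    intro t ht hmem
    refine ⟨hballD hmem, fun hG' => ?_⟩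
    have := hGball _ hmem hG'
    have happ : (x + EuclideanSpace.single i t) i = x i + t := by
      simp [EuclideanSpace.single_apply]
    rw [happ, hx] at this
    exact ht (by linarith)
  have hdist_single : ∀ t : ℝ, dist (x + EuclideanSpace.single i t) x = |t| := by
    intro t
    rw [dist_eq_norm, add_sub_cancel_left, EuclideanSpace.norm_single]
    exact Real.norm_eq_abs t
  set p : EuclideanSpace ℝ (Fin n) := x + EuclideanSpace.single i (ε/2) with hpdef
  set q : EuclideanSpace ℝ (Fin n) := x + EuclideanSpace.single i (-(ε/2)) with hqdef
  have hpB : p ∈ ball x ε := by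
    rw [mem_ball, hdist_single, abs_of_pos (by positivity)]; linarith
  have hqB : q ∈ ball x ε := by
    rw [mem_ball, hdist_single, abs_of_neg (by simp; positivity)]; simp; linarith
  have hpU : p ∈ U := hsingle_mem _ (by positivity) hpB
  have hqU : q ∈ U := hsingle_mem _ (by simp; positivity) hqB
  have hpi : p i = x i + ε/2 := by simp [hpdef, EuclideanSpace.single_apply]
  have hqi : q i = x i - ε/2 := by
    simp [hqdef, EuclideanSpace.single_apply]; ring
  set Bp : Set (EuclideanSpace ℝ (Fin n)) := ball x ε ∩ {y | v i + r * k < y i} with hBp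
  set Bm : Set (EuclideanSpace ℝ (Fin n)) := ball x ε ∩ {y | y i < v i + r * k} with hBm
  have hlin : IsLinearMap ℝ (fun y : EuclideanSpace ℝ (Fin n) => y i) :=
    ⟨fun a b => rfl, fun t a => rfl⟩
  have hBpU : Bp ⊆ U := by
    rintro y ⟨hyB, hyi⟩
    refine ⟨hballD hyB, fun hG' => ?_⟩
    have := hGball _ hyB hG'
    simp only [mem_setOf_eq, this] at hyi
    exact lt_irrefl _ hyi
  have hBmU : Bm ⊆ U := by
    rintro y ⟨hyB, hyi⟩
    refine ⟨hballD hyB, fun hG' => ?_⟩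
    have := hGball _ hyB hG'
    simp only [mem_setOf_eq, this] at hyi
    exact lt_irrefl _ hyi
  have hpBp : p ∈ Bp := ⟨hpB, by rw [mem_setOf_eq, hpi, hx]; linarith⟩
  have hqBm : q ∈ Bm := ⟨hqB, by rw [mem_setOf_eq, hqi, hx]; linarith⟩
  have hBpC : Bp ⊆ connectedComponentIn U p :=
    ((convex_ball x ε).inter (convex_halfSpace_gt hlin _)).isPreconnected.subset_connectedComponentIn
      hpBp hBpU
  have hBmC : Bm ⊆ connectedComponentIn U q :=
    ((convex_ball x ε).inter (convex_halfSpace_lt hlin _)).isPreconnected.subset_connectedComponentIn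
      hqBm hBmU
  refine ⟨p, q, hpU, hqU, ?_⟩
  rintro C ⟨z, hzU, rfl⟩ hxfr
  have hxcl : x ∈ closure (connectedComponentIn U z) := frontier_subset_closure hxfr
  obtain ⟨y, hyB, hyC⟩ := mem_closure_iff.1 hxcl (ball x ε) isOpen_ball (mem_ball_self hεpos)
  have hyU : y ∈ U := connectedComponentIn_subset U z hyC
  have hyi : y i ≠ v i + r * k := fun h => hyU.2 ⟨i, k, h⟩
  rcases lt_or_gt_of_ne hyi with hlt | hgt
  · right
    have h1 : y ∈ connectedComponentIn U q := hBmC ⟨hyB, hlt⟩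
    rw [connectedComponentIn_eq hyC, connectedComponentIn_eq h1]
  · left
    have h1 : y ∈ connectedComponentIn U p := hBpC ⟨hyB, hgt⟩
    rw [connectedComponentIn_eq hyC, connectedComponentIn_eq h1]

/-- Cutting `D` along a grid `G` creates inside `D` a total new boundary area
at most twice the area of `D` on the grid. -/
theorem stmt_4 (n : ℕ) (hn : 1 ≤ n) (r : ℝ) (hr : 0 < r)
    (D : Set (EuclideanSpace ℝ (Fin n))) (hD : IsOpen D)
    (G : Set (EuclideanSpace ℝ (Fin n)))
    (hG : ∃ v : EuclideanSpace ℝ (Fin n),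
      G = {x : EuclideanSpace ℝ (Fin n) | ∃ i : Fin n, ∃ k : ℤ, x i = v i + r * k}) :
    ∑' C : {C : Set (EuclideanSpace ℝ (Fin n)) //
        ∃ x ∈ D \ G, connectedComponentIn (D \ G) x = C},
        μH[(n : ℝ) - 1] (D ∩ frontier (C : Set (EuclideanSpace ℝ (Fin n)))) ≤
      2 * μH[(n : ℝ) - 1] (D ∩ G) := by
  classical
  obtain ⟨v, rfl⟩ := hG
  set G : Set (EuclideanSpace ℝ (Fin n)) :=
    {x : EuclideanSpace ℝ (Fin n) | ∃ i : Fin n, ∃ k : ℤ, x i = v i + r * k} with hGdef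
  have hGclosed : IsClosed G := by
    have heq : G = ⋃ i : Fin n,
        (fun x : EuclideanSpace ℝ (Fin n) => x i) ⁻¹' {t : ℝ | ∃ k : ℤ, t = v i + r * k} := by
      ext x
      simp only [hGdef, Set.mem_setOf_eq, Set.mem_iUnion, Set.mem_preimage]
    rw [heq]
    refine isClosed_iUnion_of_finite fun i => ?_
    have hcont : Continuous (fun x : EuclideanSpace ℝ (Fin n) => x i) :=
      (EuclideanSpace.proj (𝕜 := ℝ) i).continuous
    exact (stmt4_closed_1d _ _ hr).preimage hcont
  set U : Set (EuclideanSpace ℝ (Fin n)) := D \ G with hUdef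
  have hUopen : IsOpen U := hD.sdiff hGclosed
  set κ := {C : Set (EuclideanSpace ℝ (Fin n)) //
      ∃ x ∈ U, connectedComponentIn U x = C} with hκ
  have hopen : ∀ t : κ, IsOpen (t : Set (EuclideanSpace ℝ (Fin n))) := by
    rintro ⟨C, z, hz, rfl⟩; exact hUopen.connectedComponentIn
  have hcc : ∀ (t : κ) (y), y ∈ (t : Set (EuclideanSpace ℝ (Fin n))) →
      connectedComponentIn U y = (t : Set (EuclideanSpace ℝ (Fin n))) := by
    rintro ⟨C, z, hz, rfl⟩ y hy; exact (connectedComponentIn_eq hy).symm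
  have hcnt : Countable κ := by
    refine Pairwise.countable_of_isOpen_disjoint
      (s := fun t : κ => (t : Set (EuclideanSpace ℝ (Fin n)))) ?_ (fun t => hopen t) ?_
    · intro s t hst
      rw [Function.onFun, Set.disjoint_left]
      intro w hws hwt
      exact hst (Subtype.ext ((hcc s w hws).symm.trans (hcc t w hwt)))
    · rintro ⟨C, z, hz, rfl⟩; exact ⟨z, mem_connectedComponentIn hz⟩
  have hfrG : ∀ t : κ, D ∩ frontier (t : Set (EuclideanSpace ℝ (Fin n))) ⊆ D ∩ G := by
    rintro t w ⟨hwD, hwfr⟩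
    refine ⟨hwD, ?_⟩
    by_contra hwG
    have hwU : w ∈ U := ⟨hwD, hwG⟩
    have hwcl : w ∈ closure (t : Set (EuclideanSpace ℝ (Fin n))) := frontier_subset_closure hwfr
    have hwC : w ∈ (t : Set (EuclideanSpace ℝ (Fin n))) := by
      obtain ⟨y, hyO, hyC⟩ := mem_closure_iff.1 hwcl (connectedComponentIn U w)
        hUopen.connectedComponentIn (mem_connectedComponentIn hwU)
      have h1 : connectedComponentIn U w = connectedComponentIn U y := connectedComponentIn_eq hyO
      have h2 : connectedComponentIn U y = (t : Set (EuclideanSpace ℝ (Fin n))) := hcc t y hyC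
      exact (h1.trans h2) ▸ mem_connectedComponentIn hwU
    rw [(hopen t).frontier_eq] at hwfr
    exact hwfr.2 hwC
  set Bad : Set (EuclideanSpace ℝ (Fin n)) := ⋃ (i : Fin n) (j : Fin n) (_ : i ≠ j) (k : ℤ)
      (l : ℤ), {x : EuclideanSpace ℝ (Fin n) | x i = v i + r * k ∧ x j = v j + r * l} with hBad
  have hBadnull : μH[(n:ℝ)-1] Bad = 0 :=
    measure_iUnion_null fun i => measure_iUnion_null fun j => measure_iUnion_null fun hij =>
      measure_iUnion_null fun k => measure_iUnion_null fun l => stmt4_plane_null n i j hij _ _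
  have hae : ∀ᵐ w ∂(μH[(n:ℝ)-1] : Measure (EuclideanSpace ℝ (Fin n))), w ∉ Bad :=
    measure_eq_zero_iff_ae_notMem.1 hBadnull
  have hmeasA : ∀ t : κ, MeasurableSet (D ∩ frontier (t : Set (EuclideanSpace ℝ (Fin n)))) :=
    fun t => hD.measurableSet.inter isClosed_frontier.measurableSet
  have hmeasDG : MeasurableSet (D ∩ G) := hD.measurableSet.inter hGclosed.measurableSet
  have hpt : ∀ w, w ∉ Bad →
      (∑' t : κ, (D ∩ frontier (t : Set (EuclideanSpace ℝ (Fin n)))).indicator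
          (1 : EuclideanSpace ℝ (Fin n) → ℝ≥0∞) w) ≤
        2 * (D ∩ G).indicator (1 : EuclideanSpace ℝ (Fin n) → ℝ≥0∞) w := by
    intro w hw
    by_cases hwDG : w ∈ D ∩ G
    · obtain ⟨i, k, hik⟩ := hwDG.2
      have honly : ∀ j, j ≠ i → ∀ l : ℤ, w j ≠ v j + r * l := by
        intro j hji l hl
        exact hw (Set.mem_iUnion.2 ⟨i, Set.mem_iUnion.2 ⟨j, Set.mem_iUnion.2 ⟨Ne.symm hji,
          Set.mem_iUnion.2 ⟨k, Set.mem_iUnion.2 ⟨l, ⟨hik, hl⟩⟩⟩⟩⟩⟩)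
      obtain ⟨a, b, haU, hbU, hkey⟩ := stmt4_two_comps n r hr v D hD w hwDG.1 i k hik honly
      set ta : κ := ⟨connectedComponentIn U a, a, haU, rfl⟩ with hta
      set tb : κ := ⟨connectedComponentIn U b, b, hbU, rfl⟩ with htb
      have hzero : ∀ t : κ, t ∉ ({ta, tb} : Finset κ) →
          (D ∩ frontier (t : Set (EuclideanSpace ℝ (Fin n)))).indicator
            (1 : EuclideanSpace ℝ (Fin n) → ℝ≥0∞) w = 0 := by
        intro t ht
        rw [Set.indicator_of_notMem]
        intro hwt
        rcases hkey (t : Set (EuclideanSpace ℝ (Fin n))) t.2 hwt.2 with h | h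
        · exact ht (Finset.mem_insert.2 (Or.inl (Subtype.ext h)))
        · exact ht (Finset.mem_insert.2 (Or.inr (Finset.mem_singleton.2 (Subtype.ext h))))
      rw [tsum_eq_sum hzero]
      have hsum : (∑ t ∈ ({ta, tb} : Finset κ),
          (D ∩ frontier (t : Set (EuclideanSpace ℝ (Fin n)))).indicator
            (1 : EuclideanSpace ℝ (Fin n) → ℝ≥0∞) w) ≤
          ∑ _t ∈ ({ta, tb} : Finset κ), (1 : ℝ≥0∞) := by
        refine Finset.sum_le_sum fun t _ => ?_
        classical
        by_cases hwt : w ∈ D ∩ frontier (t : Set (EuclideanSpace ℝ (Fin n)))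
        · rw [Set.indicator_of_mem hwt]; exact le_rfl
        · rw [Set.indicator_of_notMem hwt]; exact zero_le
      have hcard : (∑ _t ∈ ({ta, tb} : Finset κ), (1 : ℝ≥0∞)) ≤ 2 := by
        rw [Finset.sum_const, nsmul_eq_mul, mul_one]
        have := Finset.card_insert_le ta ({tb} : Finset κ)
        simp only [Finset.card_singleton] at this
        exact_mod_cast Nat.cast_le.2 this
      rw [Set.indicator_of_mem hwDG]
      simp only [Pi.one_apply, mul_one]
      exact hsum.trans hcard
    · have hz : ∀ t : κ, (D ∩ frontier (t : Set (EuclideanSpace ℝ (Fin n)))).indicator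
          (1 : EuclideanSpace ℝ (Fin n) → ℝ≥0∞) w = 0 :=
        fun t => Set.indicator_of_notMem (fun hwt => hwDG (hfrG t hwt)) _
      rw [tsum_congr hz, tsum_zero]
      exact zero_le
  calc (∑' t : κ, μH[(n:ℝ)-1] (D ∩ frontier (t : Set (EuclideanSpace ℝ (Fin n)))))
      = ∑' t : κ, ∫⁻ w, (D ∩ frontier (t : Set (EuclideanSpace ℝ (Fin n)))).indicator 1 w
          ∂(μH[(n:ℝ)-1] : Measure (EuclideanSpace ℝ (Fin n))) := by
        exact tsum_congr fun t => (lintegral_indicator_one (hmeasA t)).symm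
    _ = ∫⁻ w, ∑' t : κ, (D ∩ frontier (t : Set (EuclideanSpace ℝ (Fin n)))).indicator 1 w
          ∂(μH[(n:ℝ)-1] : Measure (EuclideanSpace ℝ (Fin n))) :=
        (lintegral_tsum fun t => (measurable_one.indicator (hmeasA t)).aemeasurable).symm
    _ ≤ ∫⁻ w, 2 * (D ∩ G).indicator 1 w
          ∂(μH[(n:ℝ)-1] : Measure (EuclideanSpace ℝ (Fin n))) :=
        lintegral_mono_ae (hae.mono fun w hw => hpt w hw)
    _ = 2 * μH[(n:ℝ)-1] (D ∩ G) := by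
        rw [lintegral_const_mul _ (measurable_one.indicator hmeasDG),
          lintegral_indicator_one hmeasDG]
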